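/- Let R be a nontrivial commutative ring and let G be a finite group of order n > 1 with a fixed enumeration of its elements. Then σ(v) is a symmetric matrix for every v in the group ring RG if and only if G is an abelian group of exponent 2 (i.e. G is commutative and every element g ∈ G satisfies g² = e). -/

import Mathlib

open Matrix

/-- The matrix `σ(v)` of a group ring element `v` with respect to a fixed enumeration `e`
of the group elements: its `(i,j)` entry is the coefficient of `v` at `(e i)⁻¹ * (e j)`. -/
def sigma {R : Type*} [CommRing R] {G : Type*} [Group G] {ι : Type*}
    (e : ι ≃ G) (v : MonoidAlgebra R G) : Matrix ι ι R :=
  Matrix.of fun i j => v.coeff ((e i)⁻¹ * e j)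

/-- The canonical involution `v ↦ v* = ∑ α_g g⁻¹` on a group ring. -/
def invol {R : Type*} [CommRing R] {G : Type*} [Group G]
    (v : MonoidAlgebra R G) : MonoidAlgebra R G :=
  MonoidAlgebra.ofCoeff (Finsupp.equivMapDomain (Equiv.inv G) v.coeff)

/-- Lemma 2.4: for a nontrivial commutative ring `R` and a finite group `G` of order
`n > 1`, `σ(v)` is symmetric for every `v ∈ RG` iff `G` is abelian of exponent 2. -/
theorem sigma_symmetric_iff_abelian_exponent_two
    {R : Type*} [CommRing R] [Nontrivial R] {G : Type*} [Group G] [Fintype G]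
    {n : ℕ} (hn : 1 < n) (e : Fin n ≃ G) :
    (∀ v : MonoidAlgebra R G, (sigma e v)ᵀ = sigma e v) ↔
      ((∀ x y : G, x * y = y * x) ∧ ∀ g : G, g ^ 2 = 1) := by
  constructor
  · intro h
    have key : ∀ a b : G, a⁻¹ * b = b⁻¹ * a := by
      intro a b
      have := congrFun (congrFun (h (MonoidAlgebra.single (a⁻¹ * b) (1 : R))) (e.symm a)) (e.symm b)
      simp only [sigma, Matrix.transpose_apply, Matrix.of_apply, Equiv.apply_symm_apply,
        MonoidAlgebra.coeff_single] at this
      by_contra hne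
      classical
      rw [Finsupp.single_apply, Finsupp.single_apply, if_neg hne, if_pos rfl] at this
      exact one_ne_zero this.symm
    have hinv : ∀ g : G, g⁻¹ = g := by
      intro g
      have := key 1 g
      simpa using this.symm
    refine ⟨fun x y => ?_, fun g => by rw [pow_two]; nth_rewrite 1 [← hinv g]; exact inv_mul_cancel g⟩
    have := key x⁻¹ y
    rw [inv_inv, hinv y, hinv x] at this
    exact this
  · rintro ⟨hcomm, hsq⟩ v
    have hinv : ∀ g : G, g⁻¹ = g := fun g => by
      rw [inv_eq_iff_mul_eq_one, ← pow_two]; exact hsq g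
    ext i j
    simp only [sigma, Matrix.transpose_apply, Matrix.of_apply]
    rw [hinv (e i), hinv (e j), hcomm]
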